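/- (Variance bound for the SWITCH estimator.) Fix a reward kernel D ∈ R(σ,Rmax) with mean reward r*(x,a), a measurable reward model r̂ with 0 ≤ r̂(x,a) ≤ Rmax(x,a) for all (x,a), and a threshold τ > 0. On n i.i.d. samples from P_μ^D, the variance of the SWITCH estimator satisfies Var(v̂_SWITCH) ≤ (2/n)·( E_μ[σ²·ρ²·1(ρ ≤ τ)] + E_μ[Rmax²·ρ²·1(ρ ≤ τ)] + E_π[Rmax²·1(ρ > τ)] ). -/

import Mathlib

open MeasureTheory ProbabilityTheory Real
open scoped ENNReal BigOperators Classical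

/-- A policy assigns to each context a probability mass function over actions. -/
structure Policy (X A : Type*) [MeasurableSpace X] [Fintype A] where
  prob : X → A → ℝ
  nonneg : ∀ x a, 0 ≤ prob x a
  sum_one : ∀ x, ∑ a, prob x a = 1
  meas : ∀ a, Measurable fun x => prob x a

variable {X A : Type*} [MeasurableSpace X] [Fintype A] [Nonempty A]
  [MeasurableSpace A] [MeasurableSingletonClass A]

/-- Importance weight ρ(x,a) = π(a|x)/μ(a|x). -/
noncomputable def impW (μp πp : Policy X A) (p : X × A) : ℝ :=
  πp.prob p.1 p.2 / μp.prob p.1 p.2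

/-- E_μ[f] : expectation of f(x,a) for x ∼ λ, a ∼ μ(·|x). -/
noncomputable def Emu (lam : Measure X) (μp : Policy X A) (f : X × A → ℝ) : ℝ :=
  ∫ x, ∑ a, μp.prob x a * f (x, a) ∂lam

/-- The distribution P_μ of (x,a) with x ∼ λ, a ∼ μ(·|x). -/
noncomputable def Policy.joint (lam : Measure X) (μp : Policy X A) : Measure (X × A) :=
  lam.bind fun x => Measure.sum fun a : A => ENNReal.ofReal (μp.prob x a) • Measure.dirac (x, a)

/-- Mean reward r*(x,a) of a reward kernel. -/
noncomputable def rstar (D : Kernel (X × A) ℝ) (p : X × A) : ℝ := ∫ r, r ∂(D p)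

/-- The value of the target policy π. -/
noncomputable def vpi (lam : Measure X) (πp : Policy X A) (D : Kernel (X × A) ℝ) : ℝ :=
  ∫ x, ∑ a, πp.prob x a * rstar D (x, a) ∂lam

/-- The joint distribution P_μ^D of ((x,a),r): x ∼ λ, a ∼ μ(·|x), r ∼ D(·|x,a). -/
noncomputable def sampleMeasure (lam : Measure X) (μp : Policy X A) (D : Kernel (X × A) ℝ) :
    Measure ((X × A) × ℝ) :=
  (Policy.joint lam μp).bind fun p => (D p).map fun r => (p, r)

/-- The class R(σ,Rmax) of reward kernels: Markov kernels with finite second moments such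
that P_μ-a.s. 0 ≤ r*(x,a) ≤ Rmax(x,a) and Var(r|x,a) ≤ σ(x,a)². -/
def InRewardClass (lam : Measure X) (μp : Policy X A) (σf Rmax : X × A → ℝ)
    (D : Kernel (X × A) ℝ) : Prop :=
  IsMarkovKernel D ∧ (∀ p, Integrable (fun r => r ^ 2) (D p)) ∧
    (∀ᵐ p ∂Policy.joint lam μp,
      0 ≤ rstar D p ∧ rstar D p ≤ Rmax p ∧ variance id (D p) ≤ σf p ^ 2)

/-- Minimax risk of off-policy evaluation from n i.i.d. samples. -/
noncomputable def minimaxRisk (lam : Measure X) (μp πp : Policy X A)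
    (σf Rmax : X × A → ℝ) (n : ℕ) : ℝ≥0∞ :=
  ⨅ (vhat : (Fin n → (X × A) × ℝ) → ℝ) (_ : Measurable vhat),
    ⨆ (D : Kernel (X × A) ℝ) (_ : InRewardClass lam μp σf Rmax D),
      ∫⁻ ω, ENNReal.ofReal ((vhat ω - vpi lam πp D) ^ 2)
        ∂(Measure.pi fun _ : Fin n => sampleMeasure lam μp D)

/-- E_π[f] : expectation of f(x,a) for x ∼ λ, a ∼ π(·|x). -/
noncomputable def Epi (lam : Measure X) (πp : Policy X A) (f : X × A → ℝ) : ℝ :=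
  ∫ x, ∑ a, πp.prob x a * f (x, a) ∂lam

/-- The SWITCH estimator with threshold τ and reward model r̂ on n samples. -/
noncomputable def switchEst (μp πp : Policy X A) (rhat : X × A → ℝ) (τ : ℝ) (n : ℕ)
    (ω : Fin n → (X × A) × ℝ) : ℝ :=
  (1 / n : ℝ) * ∑ i, (ω i).2 * impW μp πp (ω i).1 *
      (if impW μp πp (ω i).1 ≤ τ then 1 else 0)
    + (1 / n : ℝ) * ∑ i, ∑ a, rhat ((ω i).1.1, a) * πp.prob (ω i).1.1 a *
      (if τ < impW μp πp ((ω i).1.1, a) then 1 else 0)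


section Helpers

lemma Policy.measurable_pair (μp : Policy X A) :
    Measurable fun p : X × A => μp.prob p.1 p.2 :=
  measurable_from_prod_countable_left fun a => μp.meas a

lemma measurable_impW (μp πp : Policy X A) : Measurable (impW μp πp) :=
  πp.measurable_pair.div μp.measurable_pair

lemma measurable_jointK (μp : Policy X A) :
    Measurable fun x : X =>
      Measure.sum fun a : A => ENNReal.ofReal (μp.prob x a) • Measure.dirac ((x, a) : X × A) := by
  apply Measure.measurable_of_measurable_coe
  intro s hs
  simp only [Measure.sum_apply _ hs, Measure.smul_apply, smul_eq_mul,
    Measure.dirac_apply' _ hs]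
  refine Measurable.ennreal_tsum fun a => ?_
  exact (ENNReal.measurable_ofReal.comp (μp.meas a)).mul
    ((measurable_one.indicator hs).comp (measurable_id.prodMk measurable_const))

lemma lintegral_joint (lam : Measure X) (μp : Policy X A) {h : X × A → ℝ≥0∞}
    (hh : Measurable h) :
    ∫⁻ p, h p ∂(Policy.joint lam μp)
      = ∫⁻ x, ∑ a, ENNReal.ofReal (μp.prob x a) * h (x, a) ∂lam := by
  rw [Policy.joint, Measure.lintegral_bind (measurable_jointK μp).aemeasurable hh.aemeasurable]
  refine lintegral_congr fun x => ?_
  rw [lintegral_sum_measure, tsum_fintype]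
  refine Finset.sum_congr rfl fun a _ => ?_
  rw [lintegral_smul_measure, lintegral_dirac' _ hh, smul_eq_mul]

lemma joint_prob (lam : Measure X) [IsProbabilityMeasure lam] (μp : Policy X A) :
    IsProbabilityMeasure (Policy.joint lam μp) := by
  constructor
  rw [Policy.joint, Measure.bind_apply MeasurableSet.univ (measurable_jointK μp).aemeasurable]
  have h1 : ∀ x : X, (Measure.sum fun a : A =>
      ENNReal.ofReal (μp.prob x a) • Measure.dirac ((x, a) : X × A)) Set.univ = 1 := by
    intro x
    rw [Measure.sum_apply _ MeasurableSet.univ, tsum_fintype]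
    simp only [Measure.smul_apply, smul_eq_mul, measure_univ, mul_one]
    rw [← ENNReal.ofReal_sum_of_nonneg fun a _ => μp.nonneg x a, μp.sum_one,
      ENNReal.ofReal_one]
  simp only [h1, lintegral_one, measure_univ, mul_one]

lemma measurable_sampleK (D : Kernel (X × A) ℝ) [IsSFiniteKernel D] :
    Measurable fun p : X × A => (D p).map fun r => (p, r) := by
  apply Measure.measurable_of_measurable_coe
  intro s hs
  have h1 : ∀ p : X × A, ((D p).map fun r => (p, r)) s
      = D p {r | ((p, r) : (X × A) × ℝ) ∈ s} := by
    intro p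
    rw [Measure.map_apply measurable_prodMk_left hs]
    rfl
  simp_rw [h1]
  exact Kernel.measurable_kernel_prodMk_left hs

lemma lintegral_sample (lam : Measure X) (μp : Policy X A) (D : Kernel (X × A) ℝ)
    [IsSFiniteKernel D] {h : (X × A) × ℝ → ℝ≥0∞} (hh : Measurable h) :
    ∫⁻ z, h z ∂(sampleMeasure lam μp D)
      = ∫⁻ p, ∫⁻ r, h (p, r) ∂(D p) ∂(Policy.joint lam μp) := by
  rw [sampleMeasure, Measure.lintegral_bind (measurable_sampleK D).aemeasurable hh.aemeasurable]
  exact lintegral_congr fun p => lintegral_map hh measurable_prodMk_left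

lemma sample_prob (lam : Measure X) [IsProbabilityMeasure lam] (μp : Policy X A)
    (D : Kernel (X × A) ℝ) [IsMarkovKernel D] :
    IsProbabilityMeasure (sampleMeasure lam μp D) := by
  haveI := joint_prob lam μp
  constructor
  rw [sampleMeasure, Measure.bind_apply MeasurableSet.univ (measurable_sampleK D).aemeasurable]
  have h1 : ∀ p : X × A, ((D p).map fun r => (p, r)) Set.univ = 1 := by
    intro p
    rw [Measure.map_apply measurable_prodMk_left MeasurableSet.univ]
    simp
  simp only [h1, lintegral_one, measure_univ, mul_one]

lemma pi_map_eval {ι : Type*} [Fintype ι] {α : Type*} [MeasurableSpace α]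
    (ν : Measure α) [IsProbabilityMeasure ν] (i : ι) :
    (Measure.pi fun _ : ι => ν).map (Function.eval i) = ν := by
  ext s hs
  rw [Measure.map_apply (measurable_pi_apply i) hs, ← Set.univ_pi_update_univ, Measure.pi_pi]
  rw [Finset.prod_eq_single i (fun b _ hb => by simp [Function.update_of_ne hb]) (by simp)]
  simp

lemma indepFun_eval {ι : Type*} [Fintype ι] {α : Type*} [MeasurableSpace α]
    (ν : Measure α) [IsProbabilityMeasure ν] {i j : ι} (hij : i ≠ j) :
    IndepFun (Function.eval i) (Function.eval j) (Measure.pi fun _ : ι => ν) := by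
  rw [indepFun_iff_measure_inter_preimage_eq_mul]
  intro s t hs ht
  have hps : ∀ (k : ι) (u : Set α), MeasurableSet u →
      (Measure.pi fun _ : ι => ν) (Function.eval k ⁻¹' u) = ν u := by
    intro k u hu
    rw [← Measure.map_apply (measurable_pi_apply k) hu, pi_map_eval]
  have h1 : Function.eval i ⁻¹' s ∩ Function.eval j ⁻¹' t
      = Set.pi Set.univ (fun k => if k = i then s else if k = j then t else Set.univ) := by
    ext ω
    simp only [Set.mem_inter_iff, Set.mem_preimage, Set.mem_univ_pi, Function.eval]
    constructor
    · rintro ⟨h1, h2⟩ k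
      by_cases hk : k = i
      · subst hk; simp [h1]
      · by_cases hk2 : k = j
        · subst hk2; simp [hk, h2]
        · simp [hk, hk2]
    · intro h
      refine ⟨?_, ?_⟩
      · have := h i; simpa using this
      · have := h j; simpa [hij.symm] using this
  rw [h1, Measure.pi_pi, hps i s hs, hps j t ht]
  have h2 : ∀ k : ι, ν (if k = i then s else if k = j then t else Set.univ)
      = (if k = i then ν s else 1) * (if k = j then ν t else 1) := by
    intro k
    by_cases hk : k = i
    · subst hk; simp [hij]
    · by_cases hk2 : k = j
      · subst hk2; simp [hk]
      · simp [hk, hk2]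
  simp_rw [h2]
  rw [Finset.prod_mul_distrib, Finset.prod_ite_eq', Finset.prod_ite_eq']
  simp

end Helpers

set_option linter.unusedSectionVars false

lemma ofReal_Emu (lam : Measure X) (μp : Policy X A) {f : X × A → ℝ}
    (hfnn : ∀ p, 0 ≤ f p)
    (hfi : Integrable (fun x => ∑ a, μp.prob x a * f (x, a)) lam)
    (hfm : Measurable f) :
    ENNReal.ofReal (Emu lam μp f) = ∫⁻ p, ENNReal.ofReal (f p) ∂(Policy.joint lam μp) := by
  rw [Emu, ofReal_integral_eq_lintegral_ofReal hfi (Filter.Eventually.of_forall fun x =>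
      Finset.sum_nonneg fun a _ => mul_nonneg (μp.nonneg x a) (hfnn _)),
    lintegral_joint lam μp hfm.ennreal_ofReal]
  refine lintegral_congr fun x => ?_
  rw [ENNReal.ofReal_sum_of_nonneg fun a _ => mul_nonneg (μp.nonneg x a) (hfnn _)]
  exact Finset.sum_congr rfl fun a _ => ENNReal.ofReal_mul (μp.nonneg x a)

lemma switch_single_bound (lam : Measure X) [IsProbabilityMeasure lam] (μp πp : Policy X A)
    (σf Rmax : X × A → ℝ) (hσm : Measurable σf) (hRm : Measurable Rmax)
    (hRnn : ∀ p, 0 ≤ Rmax p)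
    (D : Kernel (X × A) ℝ) [IsMarkovKernel D]
    (hL2 : ∀ p, Integrable (fun r => r ^ 2) (D p))
    (hae : ∀ᵐ p ∂Policy.joint lam μp,
      0 ≤ rstar D p ∧ rstar D p ≤ Rmax p ∧ variance id (D p) ≤ σf p ^ 2)
    (rhat : X × A → ℝ) (hrm : Measurable rhat)
    (hrb : ∀ p, 0 ≤ rhat p ∧ rhat p ≤ Rmax p) (τ : ℝ)
    (hint1 : Integrable (fun x => ∑ a, μp.prob x a *
      (σf (x, a) ^ 2 * impW μp πp (x, a) ^ 2 *
        (if impW μp πp (x, a) ≤ τ then 1 else 0))) lam)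
    (hint2 : Integrable (fun x => ∑ a, μp.prob x a *
      (Rmax (x, a) ^ 2 * impW μp πp (x, a) ^ 2 *
        (if impW μp πp (x, a) ≤ τ then 1 else 0))) lam)
    (hint3 : Integrable (fun x => ∑ a, πp.prob x a *
      (Rmax (x, a) ^ 2 * (if τ < impW μp πp (x, a) then 1 else 0))) lam) :
    ∫⁻ z : (X × A) × ℝ, ENNReal.ofReal
        ((z.2 * impW μp πp z.1 * (if impW μp πp z.1 ≤ τ then 1 else 0)
          + ∑ a, rhat (z.1.1, a) * πp.prob z.1.1 a *
              (if τ < impW μp πp (z.1.1, a) then 1 else 0)) ^ 2)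
      ∂(sampleMeasure lam μp D)
      ≤ ENNReal.ofReal (2 *
          (Emu lam μp (fun p => σf p ^ 2 * impW μp πp p ^ 2 *
              (if impW μp πp p ≤ τ then 1 else 0))
            + Emu lam μp (fun p => Rmax p ^ 2 * impW μp πp p ^ 2 *
              (if impW μp πp p ≤ τ then 1 else 0))
            + Epi lam πp (fun p => Rmax p ^ 2 *
              (if τ < impW μp πp p then 1 else 0)))) := by
  classical
  haveI hJP : IsProbabilityMeasure (Policy.joint lam μp) := joint_prob lam μp
  have hite : ∀ (b : Prop) [Decidable b], (0:ℝ) ≤ if b then 1 else 0 := by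
    intro b _; split_ifs <;> norm_num
  have hwm : Measurable (impW μp πp) := measurable_impW μp πp
  have hindm : Measurable fun p : X × A => (if impW μp πp p ≤ τ then (1:ℝ) else 0) :=
    Measurable.ite (measurableSet_le hwm measurable_const) measurable_const measurable_const
  have hcm : Measurable fun p : X × A =>
      impW μp πp p * (if impW μp πp p ≤ τ then (1:ℝ) else 0) := hwm.mul hindm
  have hgm : Measurable fun x : X => ∑ a, rhat (x, a) * πp.prob x a *
      (if τ < impW μp πp (x, a) then (1:ℝ) else 0) := by
    apply Finset.measurable_sum
    intro a _
    have h1 : Measurable fun x : X => rhat (x, a) :=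
      hrm.comp (measurable_id.prodMk measurable_const)
    have h2 : Measurable fun x : X => impW μp πp (x, a) :=
      hwm.comp (measurable_id.prodMk measurable_const)
    exact (h1.mul (πp.meas a)).mul
      (Measurable.ite (measurableSet_lt measurable_const h2) measurable_const measurable_const)
  -- nonnegativity of the three expectations
  have hu1nn : ∀ p : X × A, 0 ≤ σf p ^ 2 * impW μp πp p ^ 2 *
      (if impW μp πp p ≤ τ then (1:ℝ) else 0) :=
    fun p => mul_nonneg (mul_nonneg (sq_nonneg _) (sq_nonneg _)) (hite _)
  have hu2nn : ∀ p : X × A, 0 ≤ Rmax p ^ 2 * impW μp πp p ^ 2 *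
      (if impW μp πp p ≤ τ then (1:ℝ) else 0) :=
    fun p => mul_nonneg (mul_nonneg (sq_nonneg _) (sq_nonneg _)) (hite _)
  have hu3nn : ∀ p : X × A, 0 ≤ Rmax p ^ 2 * (if τ < impW μp πp p then (1:ℝ) else 0) :=
    fun p => mul_nonneg (sq_nonneg _) (hite _)
  have hT1nn : 0 ≤ Emu lam μp (fun p => σf p ^ 2 * impW μp πp p ^ 2 *
      (if impW μp πp p ≤ τ then 1 else 0)) :=
    integral_nonneg fun x => Finset.sum_nonneg fun a _ =>
      mul_nonneg (μp.nonneg x a) (hu1nn _)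
  have hT2nn : 0 ≤ Emu lam μp (fun p => Rmax p ^ 2 * impW μp πp p ^ 2 *
      (if impW μp πp p ≤ τ then 1 else 0)) :=
    integral_nonneg fun x => Finset.sum_nonneg fun a _ =>
      mul_nonneg (μp.nonneg x a) (hu2nn _)
  have hT3nn : 0 ≤ Epi lam πp (fun p => Rmax p ^ 2 *
      (if τ < impW μp πp p then 1 else 0)) :=
    integral_nonneg fun x => Finset.sum_nonneg fun a _ =>
      mul_nonneg (πp.nonneg x a) (hu3nn _)
  -- measurability of the two parts of the integrand
  have hmA : Measurable fun z : (X × A) × ℝ => ENNReal.ofReal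
      ((z.2 * impW μp πp z.1 * (if impW μp πp z.1 ≤ τ then 1 else 0)) ^ 2) := by
    exact (((measurable_snd.mul (hwm.comp measurable_fst)).mul
      (hindm.comp measurable_fst)).pow_const 2).ennreal_ofReal
  have hmB : Measurable fun z : (X × A) × ℝ => ENNReal.ofReal
      ((∑ a, rhat (z.1.1, a) * πp.prob z.1.1 a *
        (if τ < impW μp πp (z.1.1, a) then (1:ℝ) else 0)) ^ 2) :=
    (((hgm.comp measurable_fst.fst)).pow_const 2).ennreal_ofReal
  -- second moment of the importance-weighted part
  have hAle : (∫⁻ z : (X × A) × ℝ, ENNReal.ofReal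
        ((z.2 * impW μp πp z.1 * (if impW μp πp z.1 ≤ τ then 1 else 0)) ^ 2)
        ∂(sampleMeasure lam μp D))
      ≤ ENNReal.ofReal (Emu lam μp (fun p => σf p ^ 2 * impW μp πp p ^ 2 *
            (if impW μp πp p ≤ τ then 1 else 0)))
        + ENNReal.ofReal (Emu lam μp (fun p => Rmax p ^ 2 * impW μp πp p ^ 2 *
            (if impW μp πp p ≤ τ then 1 else 0))) := by
    rw [lintegral_sample lam μp D hmA]
    have hinner : ∀ p : X × A, (∫⁻ r, ENNReal.ofReal
        ((r * impW μp πp p * (if impW μp πp p ≤ τ then 1 else 0)) ^ 2) ∂(D p))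
        = (∫⁻ r, ENNReal.ofReal (r ^ 2) ∂(D p))
          * ENNReal.ofReal ((impW μp πp p * (if impW μp πp p ≤ τ then (1:ℝ) else 0)) ^ 2) := by
      intro p
      have hm2 : Measurable fun r : ℝ => ENNReal.ofReal (r ^ 2) :=
        (measurable_id.pow_const 2).ennreal_ofReal
      rw [← lintegral_mul_const _ hm2]
      refine lintegral_congr fun r => ?_
      rw [← ENNReal.ofReal_mul (sq_nonneg r)]
      congr 1
      ring
    have hkey : ∀ᵐ p ∂(Policy.joint lam μp),
        (∫⁻ r, ENNReal.ofReal (r ^ 2) ∂(D p))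
          * ENNReal.ofReal ((impW μp πp p * (if impW μp πp p ≤ τ then (1:ℝ) else 0)) ^ 2)
        ≤ ENNReal.ofReal
            (σf p ^ 2 * impW μp πp p ^ 2 * (if impW μp πp p ≤ τ then 1 else 0)
              + Rmax p ^ 2 * impW μp πp p ^ 2 * (if impW μp πp p ≤ τ then 1 else 0)) := by
      filter_upwards [hae] with p hp
      obtain ⟨h0, hR, hV⟩ := hp
      have hint : Integrable (fun r : ℝ => r ^ 2) (D p) := hL2 p
      have hMem : MemLp (id : ℝ → ℝ) 2 (D p) :=
        (memLp_two_iff_integrable_sq aestronglyMeasurable_id).2 (by simpa using hint)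
      have hlin : (∫⁻ r, ENNReal.ofReal (r ^ 2) ∂(D p))
          = ENNReal.ofReal (∫ r, r ^ 2 ∂(D p)) :=
        (ofReal_integral_eq_lintegral_ofReal hint
          (Filter.Eventually.of_forall fun r => sq_nonneg r)).symm
      have e1 : (D p)[id ^ 2] = ∫ r, r ^ 2 ∂(D p) := by
        refine integral_congr_ae (Filter.Eventually.of_forall fun r => ?_)
        simp
      have hsq : variance id (D p) + rstar D p ^ 2 = ∫ r, r ^ 2 ∂(D p) := by
        rw [variance_eq_sub hMem, e1]
        have e2 : (D p)[id] = rstar D p := rfl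
        rw [e2]; ring
      rw [hlin, ← ENNReal.ofReal_mul (integral_nonneg fun r => sq_nonneg r)]
      apply ENNReal.ofReal_le_ofReal
      have hvr : ∫ r, r ^ 2 ∂(D p) ≤ σf p ^ 2 + Rmax p ^ 2 := by
        rw [← hsq]
        have h2 : rstar D p ^ 2 ≤ Rmax p ^ 2 := by nlinarith
        linarith
      have hcsq : (impW μp πp p * (if impW μp πp p ≤ τ then (1:ℝ) else 0)) ^ 2
          = impW μp πp p ^ 2 * (if impW μp πp p ≤ τ then (1:ℝ) else 0) := by
        by_cases h : impW μp πp p ≤ τ <;> simp [h] <;> ring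
      calc (∫ r, r ^ 2 ∂(D p))
            * (impW μp πp p * (if impW μp πp p ≤ τ then (1:ℝ) else 0)) ^ 2
          ≤ (σf p ^ 2 + Rmax p ^ 2)
            * (impW μp πp p * (if impW μp πp p ≤ τ then (1:ℝ) else 0)) ^ 2 :=
            mul_le_mul_of_nonneg_right hvr (sq_nonneg _)
        _ = σf p ^ 2 * impW μp πp p ^ 2 * (if impW μp πp p ≤ τ then 1 else 0)
              + Rmax p ^ 2 * impW μp πp p ^ 2 * (if impW μp πp p ≤ τ then 1 else 0) := by
            rw [hcsq]; ring
    calc (∫⁻ p, ∫⁻ r, ENNReal.ofReal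
            ((r * impW μp πp p * (if impW μp πp p ≤ τ then 1 else 0)) ^ 2) ∂(D p)
          ∂(Policy.joint lam μp))
        = ∫⁻ p, (∫⁻ r, ENNReal.ofReal (r ^ 2) ∂(D p))
            * ENNReal.ofReal ((impW μp πp p * (if impW μp πp p ≤ τ then (1:ℝ) else 0)) ^ 2)
          ∂(Policy.joint lam μp) := lintegral_congr hinner
      _ ≤ ∫⁻ p, ENNReal.ofReal
            (σf p ^ 2 * impW μp πp p ^ 2 * (if impW μp πp p ≤ τ then 1 else 0)
              + Rmax p ^ 2 * impW μp πp p ^ 2 * (if impW μp πp p ≤ τ then 1 else 0))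
          ∂(Policy.joint lam μp) := lintegral_mono_ae hkey
      _ = ∫⁻ p, (ENNReal.ofReal
            (σf p ^ 2 * impW μp πp p ^ 2 * (if impW μp πp p ≤ τ then 1 else 0))
            + ENNReal.ofReal
            (Rmax p ^ 2 * impW μp πp p ^ 2 * (if impW μp πp p ≤ τ then 1 else 0)))
          ∂(Policy.joint lam μp) :=
          lintegral_congr fun p => ENNReal.ofReal_add (hu1nn p) (hu2nn p)
      _ = (∫⁻ p, ENNReal.ofReal
            (σf p ^ 2 * impW μp πp p ^ 2 * (if impW μp πp p ≤ τ then 1 else 0))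
            ∂(Policy.joint lam μp))
          + ∫⁻ p, ENNReal.ofReal
            (Rmax p ^ 2 * impW μp πp p ^ 2 * (if impW μp πp p ≤ τ then 1 else 0))
            ∂(Policy.joint lam μp) := by
          apply lintegral_add_left
          exact (((hσm.pow_const 2).mul (hwm.pow_const 2)).mul hindm).ennreal_ofReal
      _ = ENNReal.ofReal (Emu lam μp (fun p => σf p ^ 2 * impW μp πp p ^ 2 *
            (if impW μp πp p ≤ τ then 1 else 0)))
          + ENNReal.ofReal (Emu lam μp (fun p => Rmax p ^ 2 * impW μp πp p ^ 2 *
            (if impW μp πp p ≤ τ then 1 else 0))) := by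
          rw [ofReal_Emu lam μp hu1nn hint1
              ((((hσm.pow_const 2).mul (hwm.pow_const 2)).mul hindm)),
            ofReal_Emu lam μp hu2nn hint2
              ((((hRm.pow_const 2).mul (hwm.pow_const 2)).mul hindm))]
  -- second moment of the model part
  have hBle : (∫⁻ z : (X × A) × ℝ, ENNReal.ofReal
        ((∑ a, rhat (z.1.1, a) * πp.prob z.1.1 a *
          (if τ < impW μp πp (z.1.1, a) then (1:ℝ) else 0)) ^ 2)
        ∂(sampleMeasure lam μp D))
      ≤ ENNReal.ofReal (Epi lam πp (fun p => Rmax p ^ 2 *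
          (if τ < impW μp πp p then 1 else 0))) := by
    rw [lintegral_sample lam μp D hmB]
    have h1 : ∀ p : X × A, (∫⁻ _, ENNReal.ofReal
        ((∑ a, rhat (p.1, a) * πp.prob p.1 a *
          (if τ < impW μp πp (p.1, a) then (1:ℝ) else 0)) ^ 2) ∂(D p))
        = ENNReal.ofReal ((∑ a, rhat (p.1, a) * πp.prob p.1 a *
          (if τ < impW μp πp (p.1, a) then (1:ℝ) else 0)) ^ 2) := by
      intro p
      rw [MeasureTheory.lintegral_const, measure_univ, mul_one]
    calc (∫⁻ p, ∫⁻ _, ENNReal.ofReal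
            ((∑ a, rhat (p.1, a) * πp.prob p.1 a *
              (if τ < impW μp πp (p.1, a) then (1:ℝ) else 0)) ^ 2) ∂(D p)
          ∂(Policy.joint lam μp))
        = ∫⁻ p, ENNReal.ofReal ((∑ a, rhat (p.1, a) * πp.prob p.1 a *
            (if τ < impW μp πp (p.1, a) then (1:ℝ) else 0)) ^ 2)
          ∂(Policy.joint lam μp) := lintegral_congr h1
      _ = ∫⁻ x, ∑ a, ENNReal.ofReal (μp.prob x a)
            * ENNReal.ofReal ((∑ a', rhat (x, a') * πp.prob x a' *
              (if τ < impW μp πp (x, a') then (1:ℝ) else 0)) ^ 2) ∂lam :=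
          lintegral_joint lam μp ((hgm.comp measurable_fst).pow_const 2).ennreal_ofReal
      _ = ∫⁻ x, ENNReal.ofReal ((∑ a', rhat (x, a') * πp.prob x a' *
            (if τ < impW μp πp (x, a') then (1:ℝ) else 0)) ^ 2) ∂lam := by
          refine lintegral_congr fun x => ?_
          rw [← Finset.sum_mul, ← ENNReal.ofReal_sum_of_nonneg fun a _ => μp.nonneg x a,
            μp.sum_one, ENNReal.ofReal_one, one_mul]
      _ ≤ ∫⁻ x, ENNReal.ofReal (∑ a, πp.prob x a * (Rmax (x, a) ^ 2 *
            (if τ < impW μp πp (x, a) then (1:ℝ) else 0))) ∂lam := by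
          refine lintegral_mono fun x => ENNReal.ofReal_le_ofReal ?_
          have hCS : (∑ a, rhat (x, a) * πp.prob x a *
              (if τ < impW μp πp (x, a) then (1:ℝ) else 0)) ^ 2
              ≤ (∑ a, πp.prob x a) * ∑ a, πp.prob x a *
                (rhat (x, a) * (if τ < impW μp πp (x, a) then (1:ℝ) else 0)) ^ 2 := by
            refine Finset.sum_sq_le_sum_mul_sum_of_sq_eq_mul Finset.univ
              (fun a _ => πp.nonneg x a)
              (fun a _ => mul_nonneg (πp.nonneg x a) (sq_nonneg _)) (fun a _ => by ring)
          rw [πp.sum_one, one_mul] at hCS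
          refine hCS.trans (Finset.sum_le_sum fun a _ => ?_)
          refine mul_le_mul_of_nonneg_left ?_ (πp.nonneg x a)
          by_cases h : τ < impW μp πp (x, a)
          · simp only [h, if_true, mul_one]
            exact pow_le_pow_left₀ (hrb _).1 (hrb _).2 2
          · simp [h]
      _ = ENNReal.ofReal (Epi lam πp (fun p => Rmax p ^ 2 *
            (if τ < impW μp πp p then 1 else 0))) := by
          rw [Epi, ofReal_integral_eq_lintegral_ofReal hint3
            (Filter.Eventually.of_forall fun x => Finset.sum_nonneg fun a _ =>
              mul_nonneg (πp.nonneg x a) (hu3nn _))]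
  -- combine
  have hsplit : ∀ z : (X × A) × ℝ, ENNReal.ofReal
      ((z.2 * impW μp πp z.1 * (if impW μp πp z.1 ≤ τ then 1 else 0)
        + ∑ a, rhat (z.1.1, a) * πp.prob z.1.1 a *
            (if τ < impW μp πp (z.1.1, a) then 1 else 0)) ^ 2)
      ≤ 2 * ENNReal.ofReal
          ((z.2 * impW μp πp z.1 * (if impW μp πp z.1 ≤ τ then 1 else 0)) ^ 2)
        + 2 * ENNReal.ofReal
          ((∑ a, rhat (z.1.1, a) * πp.prob z.1.1 a *
            (if τ < impW μp πp (z.1.1, a) then (1:ℝ) else 0)) ^ 2) := by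
    intro z
    set a1 : ℝ := z.2 * impW μp πp z.1 * (if impW μp πp z.1 ≤ τ then 1 else 0) with ha1
    set b1 : ℝ := ∑ a, rhat (z.1.1, a) * πp.prob z.1.1 a *
      (if τ < impW μp πp (z.1.1, a) then (1:ℝ) else 0) with hb1
    have h1 : (a1 + b1) ^ 2 ≤ 2 * a1 ^ 2 + 2 * b1 ^ 2 := by nlinarith [sq_nonneg (a1 - b1)]
    calc ENNReal.ofReal ((a1 + b1) ^ 2) ≤ ENNReal.ofReal (2 * a1 ^ 2 + 2 * b1 ^ 2) :=
          ENNReal.ofReal_le_ofReal h1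
      _ = 2 * ENNReal.ofReal (a1 ^ 2) + 2 * ENNReal.ofReal (b1 ^ 2) := by
          rw [ENNReal.ofReal_add (by positivity) (by positivity),
            ENNReal.ofReal_mul (by norm_num), ENNReal.ofReal_mul (by norm_num)]
          norm_num
  calc (∫⁻ z : (X × A) × ℝ, ENNReal.ofReal
        ((z.2 * impW μp πp z.1 * (if impW μp πp z.1 ≤ τ then 1 else 0)
          + ∑ a, rhat (z.1.1, a) * πp.prob z.1.1 a *
              (if τ < impW μp πp (z.1.1, a) then 1 else 0)) ^ 2)
        ∂(sampleMeasure lam μp D))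
      ≤ ∫⁻ z : (X × A) × ℝ, (2 * ENNReal.ofReal
          ((z.2 * impW μp πp z.1 * (if impW μp πp z.1 ≤ τ then 1 else 0)) ^ 2)
        + 2 * ENNReal.ofReal
          ((∑ a, rhat (z.1.1, a) * πp.prob z.1.1 a *
            (if τ < impW μp πp (z.1.1, a) then (1:ℝ) else 0)) ^ 2))
        ∂(sampleMeasure lam μp D) := lintegral_mono hsplit
    _ = 2 * (∫⁻ z : (X × A) × ℝ, ENNReal.ofReal
          ((z.2 * impW μp πp z.1 * (if impW μp πp z.1 ≤ τ then 1 else 0)) ^ 2)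
          ∂(sampleMeasure lam μp D))
        + 2 * ∫⁻ z : (X × A) × ℝ, ENNReal.ofReal
          ((∑ a, rhat (z.1.1, a) * πp.prob z.1.1 a *
            (if τ < impW μp πp (z.1.1, a) then (1:ℝ) else 0)) ^ 2)
          ∂(sampleMeasure lam μp D) := by
        rw [lintegral_add_left (hmA.const_mul 2), lintegral_const_mul 2 hmA,
          lintegral_const_mul 2 hmB]
    _ ≤ 2 * (ENNReal.ofReal (Emu lam μp (fun p => σf p ^ 2 * impW μp πp p ^ 2 *
            (if impW μp πp p ≤ τ then 1 else 0)))
          + ENNReal.ofReal (Emu lam μp (fun p => Rmax p ^ 2 * impW μp πp p ^ 2 *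
            (if impW μp πp p ≤ τ then 1 else 0))))
        + 2 * ENNReal.ofReal (Epi lam πp (fun p => Rmax p ^ 2 *
            (if τ < impW μp πp p then 1 else 0))) :=
        add_le_add (mul_le_mul_right hAle 2) (mul_le_mul_right hBle 2)
    _ = ENNReal.ofReal (2 *
          (Emu lam μp (fun p => σf p ^ 2 * impW μp πp p ^ 2 *
              (if impW μp πp p ≤ τ then 1 else 0))
            + Emu lam μp (fun p => Rmax p ^ 2 * impW μp πp p ^ 2 *
              (if impW μp πp p ≤ τ then 1 else 0))
            + Epi lam πp (fun p => Rmax p ^ 2 *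
              (if τ < impW μp πp p then 1 else 0)))) := by
        rw [ENNReal.ofReal_mul (by norm_num : (0:ℝ) ≤ 2),
          ENNReal.ofReal_add (add_nonneg hT1nn hT2nn) hT3nn,
          ENNReal.ofReal_add hT1nn hT2nn, ENNReal.ofReal_ofNat]
        ring

/-- Variance bound for the SWITCH estimator. -/
theorem switch_variance_bound
    (lam : Measure X) [IsProbabilityMeasure lam] (μp πp : Policy X A)
    (habs : ∀ x a, 0 < πp.prob x a → 0 < μp.prob x a)
    (σf Rmax : X × A → ℝ) (hσm : Measurable σf) (hRm : Measurable Rmax)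
    (hσnn : ∀ p, 0 ≤ σf p) (hRnn : ∀ p, 0 ≤ Rmax p)
    (D : Kernel (X × A) ℝ) (hD : InRewardClass lam μp σf Rmax D)
    (rhat : X × A → ℝ) (hrm : Measurable rhat)
    (hrb : ∀ p, 0 ≤ rhat p ∧ rhat p ≤ Rmax p)
    (τ : ℝ) (hτ : 0 < τ) (n : ℕ) (hn : 0 < n)
    (hS : Integrable (switchEst μp πp rhat τ n)
      (Measure.pi fun _ : Fin n => sampleMeasure lam μp D))
    (hint1 : Integrable (fun x => ∑ a, μp.prob x a *
      (σf (x, a) ^ 2 * impW μp πp (x, a) ^ 2 *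
        (if impW μp πp (x, a) ≤ τ then 1 else 0))) lam)
    (hint2 : Integrable (fun x => ∑ a, μp.prob x a *
      (Rmax (x, a) ^ 2 * impW μp πp (x, a) ^ 2 *
        (if impW μp πp (x, a) ≤ τ then 1 else 0))) lam)
    (hint3 : Integrable (fun x => ∑ a, πp.prob x a *
      (Rmax (x, a) ^ 2 * (if τ < impW μp πp (x, a) then 1 else 0))) lam) :
    evariance (switchEst μp πp rhat τ n)
        (Measure.pi fun _ : Fin n => sampleMeasure lam μp D)
      ≤ ENNReal.ofReal ((2 / n) *
          (Emu lam μp (fun p => σf p ^ 2 * impW μp πp p ^ 2 *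
              (if impW μp πp p ≤ τ then 1 else 0))
            + Emu lam μp (fun p => Rmax p ^ 2 * impW μp πp p ^ 2 *
              (if impW μp πp p ≤ τ then 1 else 0))
            + Epi lam πp (fun p => Rmax p ^ 2 *
              (if τ < impW μp πp p then 1 else 0)))) := by
  classical
  obtain ⟨hMarkov, hL2, hae⟩ := hD
  haveI := hMarkov
  haveI hJP : IsProbabilityMeasure (Policy.joint lam μp) := joint_prob lam μp
  haveI hNP : IsProbabilityMeasure (sampleMeasure lam μp D) := sample_prob lam μp D
  have hite : ∀ (b : Prop) [Decidable b], (0:ℝ) ≤ if b then 1 else 0 := by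
    intro b _; split_ifs <;> norm_num
  have hwm : Measurable (impW μp πp) := measurable_impW μp πp
  have hindm : Measurable fun p : X × A => (if impW μp πp p ≤ τ then (1:ℝ) else 0) :=
    Measurable.ite (measurableSet_le hwm measurable_const) measurable_const measurable_const
  have hgm : Measurable fun x : X => ∑ a, rhat (x, a) * πp.prob x a *
      (if τ < impW μp πp ((x, a)) then (1:ℝ) else 0) := by
    apply Finset.measurable_sum
    intro a _
    have h1 : Measurable fun x : X => rhat (x, a) :=
      hrm.comp (measurable_id.prodMk measurable_const)
    have h2 : Measurable fun x : X => impW μp πp (x, a) :=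
      hwm.comp (measurable_id.prodMk measurable_const)
    exact (h1.mul (πp.meas a)).mul
      (Measurable.ite (measurableSet_lt measurable_const h2) measurable_const measurable_const)
  have hFm : Measurable fun z : (X × A) × ℝ => z.2 * impW μp πp z.1 * (if impW μp πp z.1 ≤ τ then (1:ℝ) else 0) + ∑ a, rhat (z.1.1, a) * πp.prob z.1.1 a * (if τ < impW μp πp ((z.1.1, a)) then (1:ℝ) else 0) :=
    ((measurable_snd.mul (hwm.comp measurable_fst)).mul (hindm.comp measurable_fst)).add
      (hgm.comp measurable_fst.fst)
  -- nonnegativity of the bound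
  have hT1nn : 0 ≤ Emu lam μp (fun p => σf p ^ 2 * impW μp πp p ^ 2 *
      (if impW μp πp p ≤ τ then 1 else 0)) :=
    integral_nonneg fun x => Finset.sum_nonneg fun a _ => mul_nonneg (μp.nonneg x a)
      (mul_nonneg (mul_nonneg (sq_nonneg _) (sq_nonneg _)) (hite _))
  have hT2nn : 0 ≤ Emu lam μp (fun p => Rmax p ^ 2 * impW μp πp p ^ 2 *
      (if impW μp πp p ≤ τ then 1 else 0)) :=
    integral_nonneg fun x => Finset.sum_nonneg fun a _ => mul_nonneg (μp.nonneg x a)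
      (mul_nonneg (mul_nonneg (sq_nonneg _) (sq_nonneg _)) (hite _))
  have hT3nn : 0 ≤ Epi lam πp (fun p => Rmax p ^ 2 *
      (if τ < impW μp πp p then 1 else 0)) :=
    integral_nonneg fun x => Finset.sum_nonneg fun a _ => mul_nonneg (πp.nonneg x a)
      (mul_nonneg (sq_nonneg _) (hite _))
  -- single-sample second moment bound
  have hsb : (∫⁻ z : (X × A) × ℝ, ENNReal.ofReal ((z.2 * impW μp πp z.1 * (if impW μp πp z.1 ≤ τ then (1:ℝ) else 0) + ∑ a, rhat (z.1.1, a) * πp.prob z.1.1 a * (if τ < impW μp πp ((z.1.1, a)) then (1:ℝ) else 0)) ^ 2)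
        ∂(sampleMeasure lam μp D))
      ≤ ENNReal.ofReal (2 * (Emu lam μp (fun p => σf p ^ 2 * impW μp πp p ^ 2 * (if impW μp πp p ≤ τ then 1 else 0)) + Emu lam μp (fun p => Rmax p ^ 2 * impW μp πp p ^ 2 * (if impW μp πp p ≤ τ then 1 else 0)) + Epi lam πp (fun p => Rmax p ^ 2 * (if τ < impW μp πp p then 1 else 0)))) :=
    switch_single_bound lam μp πp σf Rmax hσm hRm hRnn D hL2 hae rhat hrm hrb τ
      hint1 hint2 hint3
  have hF2int : Integrable (fun z : (X × A) × ℝ => (z.2 * impW μp πp z.1 * (if impW μp πp z.1 ≤ τ then (1:ℝ) else 0) + ∑ a, rhat (z.1.1, a) * πp.prob z.1.1 a * (if τ < impW μp πp ((z.1.1, a)) then (1:ℝ) else 0)) ^ 2)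
      (sampleMeasure lam μp D) := by
    refine ⟨(hFm.pow_const 2).aestronglyMeasurable, ?_⟩
    rw [hasFiniteIntegral_iff_ofReal (Filter.Eventually.of_forall fun z => sq_nonneg _)]
    exact lt_of_le_of_lt hsb ENNReal.ofReal_lt_top
  have hFmem : MemLp (fun z : (X × A) × ℝ => z.2 * impW μp πp z.1 * (if impW μp πp z.1 ≤ τ then (1:ℝ) else 0) + ∑ a, rhat (z.1.1, a) * πp.prob z.1.1 a * (if τ < impW μp πp ((z.1.1, a)) then (1:ℝ) else 0)) 2 (sampleMeasure lam μp D) :=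
    (memLp_two_iff_integrable_sq hFm.aestronglyMeasurable).2 hF2int
  have hvarF : variance (fun z : (X × A) × ℝ => z.2 * impW μp πp z.1 * (if impW μp πp z.1 ≤ τ then (1:ℝ) else 0) + ∑ a, rhat (z.1.1, a) * πp.prob z.1.1 a * (if τ < impW μp πp ((z.1.1, a)) then (1:ℝ) else 0)) (sampleMeasure lam μp D)
      ≤ 2 * (Emu lam μp (fun p => σf p ^ 2 * impW μp πp p ^ 2 * (if impW μp πp p ≤ τ then 1 else 0)) + Emu lam μp (fun p => Rmax p ^ 2 * impW μp πp p ^ 2 * (if impW μp πp p ≤ τ then 1 else 0)) + Epi lam πp (fun p => Rmax p ^ 2 * (if τ < impW μp πp p then 1 else 0))) := by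
    have h1 := variance_le_expectation_sq (μ := sampleMeasure lam μp D)
      hFm.aestronglyMeasurable
    have h2 : (sampleMeasure lam μp D)[(fun z : (X × A) × ℝ => z.2 * impW μp πp z.1 * (if impW μp πp z.1 ≤ τ then (1:ℝ) else 0) + ∑ a, rhat (z.1.1, a) * πp.prob z.1.1 a * (if τ < impW μp πp ((z.1.1, a)) then (1:ℝ) else 0)) ^ 2]
        = ∫ z, (z.2 * impW μp πp z.1 * (if impW μp πp z.1 ≤ τ then (1:ℝ) else 0) + ∑ a, rhat (z.1.1, a) * πp.prob z.1.1 a * (if τ < impW μp πp ((z.1.1, a)) then (1:ℝ) else 0)) ^ 2 ∂(sampleMeasure lam μp D) := rfl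
    rw [h2] at h1
    have h4 : ENNReal.ofReal (∫ z, (z.2 * impW μp πp z.1 * (if impW μp πp z.1 ≤ τ then (1:ℝ) else 0) + ∑ a, rhat (z.1.1, a) * πp.prob z.1.1 a * (if τ < impW μp πp ((z.1.1, a)) then (1:ℝ) else 0)) ^ 2 ∂(sampleMeasure lam μp D))
        = ∫⁻ z, ENNReal.ofReal ((z.2 * impW μp πp z.1 * (if impW μp πp z.1 ≤ τ then (1:ℝ) else 0) + ∑ a, rhat (z.1.1, a) * πp.prob z.1.1 a * (if τ < impW μp πp ((z.1.1, a)) then (1:ℝ) else 0)) ^ 2) ∂(sampleMeasure lam μp D) :=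
      ofReal_integral_eq_lintegral_ofReal hF2int
        (Filter.Eventually.of_forall fun z => sq_nonneg _)
    have h5 : ∫ z, (z.2 * impW μp πp z.1 * (if impW μp πp z.1 ≤ τ then (1:ℝ) else 0) + ∑ a, rhat (z.1.1, a) * πp.prob z.1.1 a * (if τ < impW μp πp ((z.1.1, a)) then (1:ℝ) else 0)) ^ 2 ∂(sampleMeasure lam μp D) ≤ 2 * (Emu lam μp (fun p => σf p ^ 2 * impW μp πp p ^ 2 * (if impW μp πp p ≤ τ then 1 else 0)) + Emu lam μp (fun p => Rmax p ^ 2 * impW μp πp p ^ 2 * (if impW μp πp p ≤ τ then 1 else 0)) + Epi lam πp (fun p => Rmax p ^ 2 * (if τ < impW μp πp p then 1 else 0))) := by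
      rw [← ENNReal.ofReal_le_ofReal_iff (by positivity)]
      rw [h4]
      exact hsb
    linarith
  -- representation of the estimator
  have hrepr : switchEst μp πp rhat τ n
      = (n:ℝ)⁻¹ • ∑ i : Fin n, (fun ω : Fin n → (X × A) × ℝ => (ω i).2 * impW μp πp (ω i).1 * (if impW μp πp (ω i).1 ≤ τ then (1:ℝ) else 0) + ∑ a, rhat ((ω i).1.1, a) * πp.prob (ω i).1.1 a * (if τ < impW μp πp (((ω i).1.1, a)) then (1:ℝ) else 0)) := by
    funext ω
    simp only [switchEst, Pi.smul_apply, Finset.sum_apply, smul_eq_mul, one_div]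
    rw [← mul_add, ← Finset.sum_add_distrib]
  have hmp : ∀ i : Fin n, MeasurePreserving (fun ω : Fin n → (X × A) × ℝ => ω i)
      (Measure.pi fun _ : Fin n => sampleMeasure lam μp D) (sampleMeasure lam μp D) :=
    fun i => ⟨measurable_pi_apply i, pi_map_eval (sampleMeasure lam μp D) i⟩
  have hXi : ∀ i : Fin n, MemLp (fun ω : Fin n → (X × A) × ℝ => (ω i).2 * impW μp πp (ω i).1 * (if impW μp πp (ω i).1 ≤ τ then (1:ℝ) else 0) + ∑ a, rhat ((ω i).1.1, a) * πp.prob (ω i).1.1 a * (if τ < impW μp πp (((ω i).1.1, a)) then (1:ℝ) else 0)) 2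
      (Measure.pi fun _ : Fin n => sampleMeasure lam μp D) :=
    fun i => hFmem.comp_measurePreserving (hmp i)
  have hswmem : MemLp (switchEst μp πp rhat τ n) 2
      (Measure.pi fun _ : Fin n => sampleMeasure lam μp D) := by
    rw [hrepr]
    exact (memLp_finset_sum' _ fun i _ => hXi i).const_smul _
  rw [← hswmem.ofReal_variance_eq]
  apply ENNReal.ofReal_le_ofReal
  have hpair : Set.Pairwise ↑(Finset.univ : Finset (Fin n))
      (fun i j => IndepFun (fun ω : Fin n → (X × A) × ℝ => (ω i).2 * impW μp πp (ω i).1 * (if impW μp πp (ω i).1 ≤ τ then (1:ℝ) else 0) + ∑ a, rhat ((ω i).1.1, a) * πp.prob (ω i).1.1 a * (if τ < impW μp πp (((ω i).1.1, a)) then (1:ℝ) else 0))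
        (fun ω : Fin n → (X × A) × ℝ => (ω j).2 * impW μp πp (ω j).1 * (if impW μp πp (ω j).1 ≤ τ then (1:ℝ) else 0) + ∑ a, rhat ((ω j).1.1, a) * πp.prob (ω j).1.1 a * (if τ < impW μp πp (((ω j).1.1, a)) then (1:ℝ) else 0))
        (Measure.pi fun _ : Fin n => sampleMeasure lam μp D)) := by
    intro i _ j _ hij
    exact (indepFun_eval (sampleMeasure lam μp D) hij).comp hFm hFm
  have hvar_i : ∀ i : Fin n, variance (fun ω : Fin n → (X × A) × ℝ => (ω i).2 * impW μp πp (ω i).1 * (if impW μp πp (ω i).1 ≤ τ then (1:ℝ) else 0) + ∑ a, rhat ((ω i).1.1, a) * πp.prob (ω i).1.1 a * (if τ < impW μp πp (((ω i).1.1, a)) then (1:ℝ) else 0))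
      (Measure.pi fun _ : Fin n => sampleMeasure lam μp D)
      = variance (fun z : (X × A) × ℝ => z.2 * impW μp πp z.1 * (if impW μp πp z.1 ≤ τ then (1:ℝ) else 0) + ∑ a, rhat (z.1.1, a) * πp.prob z.1.1 a * (if τ < impW μp πp ((z.1.1, a)) then (1:ℝ) else 0)) (sampleMeasure lam μp D) := by
    intro i
    refine IdentDistrib.variance_eq ⟨(hFm.comp (measurable_pi_apply i)).aemeasurable,
      hFm.aemeasurable, ?_⟩
    have he : (fun ω : Fin n → (X × A) × ℝ => (ω i).2 * impW μp πp (ω i).1 * (if impW μp πp (ω i).1 ≤ τ then (1:ℝ) else 0) + ∑ a, rhat ((ω i).1.1, a) * πp.prob (ω i).1.1 a * (if τ < impW μp πp (((ω i).1.1, a)) then (1:ℝ) else 0))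
        = (fun z : (X × A) × ℝ => z.2 * impW μp πp z.1 * (if impW μp πp z.1 ≤ τ then (1:ℝ) else 0) + ∑ a, rhat (z.1.1, a) * πp.prob z.1.1 a * (if τ < impW μp πp ((z.1.1, a)) then (1:ℝ) else 0)) ∘ (fun ω : Fin n → (X × A) × ℝ => ω i) := rfl
    rw [he, ← Measure.map_map hFm (measurable_pi_apply i)]
    congr 1
    exact pi_map_eval (sampleMeasure lam μp D) i
  rw [hrepr, variance_smul, IndepFun.variance_sum (fun i _ => hXi i) hpair]
  rw [Finset.sum_congr rfl fun i _ => hvar_i i, Finset.sum_const, Finset.card_univ,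
    Fintype.card_fin, nsmul_eq_mul]
  have hn' : (0:ℝ) < n := by exact_mod_cast hn
  calc ((n:ℝ)⁻¹) ^ 2 * ((n:ℝ) * variance (fun z : (X × A) × ℝ => z.2 * impW μp πp z.1 * (if impW μp πp z.1 ≤ τ then (1:ℝ) else 0) + ∑ a, rhat (z.1.1, a) * πp.prob z.1.1 a * (if τ < impW μp πp ((z.1.1, a)) then (1:ℝ) else 0))
        (sampleMeasure lam μp D))
      = variance (fun z : (X × A) × ℝ => z.2 * impW μp πp z.1 * (if impW μp πp z.1 ≤ τ then (1:ℝ) else 0) + ∑ a, rhat (z.1.1, a) * πp.prob z.1.1 a * (if τ < impW μp πp ((z.1.1, a)) then (1:ℝ) else 0)) (sampleMeasure lam μp D) / n := by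
        field_simp
    _ ≤ (2 * (Emu lam μp (fun p => σf p ^ 2 * impW μp πp p ^ 2 * (if impW μp πp p ≤ τ then 1 else 0)) + Emu lam μp (fun p => Rmax p ^ 2 * impW μp πp p ^ 2 * (if impW μp πp p ≤ τ then 1 else 0)) + Epi lam πp (fun p => Rmax p ^ 2 * (if τ < impW μp πp p then 1 else 0)))) / n := by
        gcongr
    _ = (2 / n) * (Emu lam μp (fun p => σf p ^ 2 * impW μp πp p ^ 2 * (if impW μp πp p ≤ τ then 1 else 0)) + Emu lam μp (fun p => Rmax p ^ 2 * impW μp πp p ^ 2 * (if impW μp πp p ≤ τ then 1 else 0)) + Epi lam πp (fun p => Rmax p ^ 2 * (if τ < impW μp πp p then 1 else 0))) := by ring
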